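/- Let d ≥ 2, s₁, s₂ ∈ ℝ, 0 < p₁, p₂ < ∞, 0 < q₁ ≤ ∞ and α ∈ ℝ. (i) If there exists C′ > 0 such that ‖ Σ_{P∈Γ} |Q_P|^{s₂ − 1/p₂ + 1/2} e_P ‖_{f^{s₁,q₁}_{p₁}(AB)} ≤ C′ ( ν_{α − p₁(d−1)/(q₁(d+1))}(Γ) )^{1/p₁} for every finite Γ ⊂ 𝒬_AB, then α ≤ p₁(s₂ − 1/p₂ − s₁ + 1/p₁) + p₁(d−1)/(q₁(d+1)). (ii) If there exists C > 0 such that C ( ν_{α + (d−1)/(d+1)}(Γ) )^{1/p₁} ≤ ‖ Σ_{P∈Γ} |Q_P|^{s₂ − 1/p₂ + 1/2} e_P ‖_{f^{s₁,q₁}_{p₁}(AB)} for every finite Γ ⊂ 𝒬_AB, then α ≥ p₁(s₂ − 1/p₂ − s₁ + 1/p₁) − (d−1)/(d+1). -/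

import Mathlib

open scoped ENNReal NNReal
open MeasureTheory

namespace Shear

/-- Index set `𝒬_AB` of the shearlet system: direction, scale, shear, translation. -/
structure Index (d : ℕ) where
  dir : Fin d
  j : ℕ
  l : Fin (d - 1) → ℤ
  k : Fin d → ℤ
  hl : ∀ i, |l i| ≤ 2 ^ j

/-- Lebesgue measure of the anisotropic cube `Q_P`, namely `2^{-j(d+1)}`. -/
noncomputable def cubeVol {d : ℕ} (P : Index d) : ℝ := (2 : ℝ) ^ (-(P.j : ℤ) * (d + 1))

/-- The inverse anisotropic dilation `A_(𝔡)^{-j}`. -/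
noncomputable def shearAinv (d : ℕ) (𝔡 : Fin d) (j : ℕ) : Matrix (Fin d) (Fin d) ℝ :=
  Matrix.diagonal fun i => if i = 𝔡 then (4 : ℝ) ^ (-(j : ℤ)) else (2 : ℝ) ^ (-(j : ℤ))

/-- The shear matrix `B_(𝔡)^{[ℓ]}`. -/
noncomputable def shearB (d : ℕ) (𝔡 : Fin d) (l : Fin (d - 1) → ℤ) : Matrix (Fin d) (Fin d) ℝ :=
  fun i c =>
    if hic : i = c then 1
    else if hi : i = 𝔡 then
      (if hc : (c : ℕ) < (𝔡 : ℕ) then (l ⟨c, by have := 𝔡.isLt; omega⟩ : ℝ)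
       else (l ⟨(c : ℕ) - 1, by
          have h1 : (𝔡 : ℕ) ≠ (c : ℕ) := fun h => hic (hi.trans (Fin.ext h))
          have := c.isLt; have := 𝔡.isLt; omega⟩ : ℝ))
    else 0

/-- The anisotropic cube `Q_P = A_(𝔡)^{-j} B_(𝔡)^{[-ℓ]} ([0,1)^d + k)`. -/
noncomputable def shearQ {d : ℕ} (P : Index d) : Set (Fin d → ℝ) :=
  (fun y => (shearAinv d P.dir P.j * shearB d P.dir fun i => -P.l i).mulVec y) ''
    {y : Fin d → ℝ | ∀ i, (P.k i : ℝ) ≤ y i ∧ y i < (P.k i : ℝ) + 1}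

/-- The measure `ν_β(Γ) = Σ_{P ∈ Γ} |Q_P|^β`. -/
noncomputable def nu {d : ℕ} (β : ℝ) (Γ : Set (Index d)) : ℝ≥0∞ :=
  ∑' P : Γ, ENNReal.ofReal (cubeVol (P : Index d) ^ β)

/-- The quasi-norm of the shear anisotropic inhomogeneous Besov sequence space `b^{s,q}_p(AB)`
(finite integrability parameters). -/
noncomputable def besovNorm {d : ℕ} (s p q : ℝ) (c : Index d → ℂ) : ℝ≥0∞ :=
  (∑' (𝔡 : Fin d) (j : ℕ) (l : {l : Fin (d - 1) → ℤ // ∀ i, |l i| ≤ 2 ^ j}),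
      (∑' k : Fin d → ℤ,
          (ENNReal.ofReal (((2 : ℝ) ^ (-(j : ℤ) * (d + 1))) ^ (-s + 1 / p - 1 / 2)) *
              (‖c ⟨𝔡, j, l.1, k, l.2⟩‖₊ : ℝ≥0∞)) ^ p) ^ (q / p)) ^ (1 / q)

/-- The quasi-norm of the shear anisotropic inhomogeneous Triebel–Lizorkin sequence space
`f^{s,q}_p(AB)`, `0 < q ≤ ∞`. -/
noncomputable def tlNorm {d : ℕ} (s p : ℝ) (q : ℝ≥0∞) (c : Index d → ℂ) : ℝ≥0∞ :=
  (∫⁻ x : Fin d → ℝ,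
      (if q = ∞ then
          ⨆ P : Index d,
            ENNReal.ofReal (cubeVol P ^ (-s - 1 / 2)) * (‖c P‖₊ : ℝ≥0∞) *
              (shearQ P).indicator (fun _ => (1 : ℝ≥0∞)) x
        else
          (∑' P : Index d,
              (ENNReal.ofReal (cubeVol P ^ (-s - 1 / 2)) * (‖c P‖₊ : ℝ≥0∞) *
                  (shearQ P).indicator (fun _ => (1 : ℝ≥0∞)) x) ^ q.toReal) ^ (1 / q.toReal)) ^ p)
    ^ (1 / p)

/-- Non-increasing rearrangement of a sequence with respect to a (set-function) measure `ν`. -/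
noncomputable def rearr {D : Type*} (ν : Set D → ℝ≥0∞) (c : D → ℂ) (t : ℝ≥0∞) : ℝ≥0∞ :=
  sInf {lam : ℝ≥0∞ | ν {I | lam < (‖c I‖₊ : ℝ≥0∞)} ≤ t}

/-- Quasi-norm of the weighted discrete Lorentz space `ℓ^{p,μ}(u,ν)`. -/
noncomputable def lorentzNorm {D : Type*} (ν : Set D → ℝ≥0∞) (u : D → ℝ) (p : ℝ) (μ : ℝ≥0∞)
    (c : D → ℂ) : ℝ≥0∞ :=
  if μ = ∞ then
    ⨆ t : {t : ℝ // 0 < t},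
      ENNReal.ofReal (t.1 ^ (1 / p)) * rearr ν (fun I => (u I : ℂ) * c I) (ENNReal.ofReal t.1)
  else
    (∫⁻ t in Set.Ioi (0 : ℝ),
        (ENNReal.ofReal (t ^ (1 / p)) *
              rearr ν (fun I => (u I : ℂ) * c I) (ENNReal.ofReal t)) ^ μ.toReal /
          ENNReal.ofReal t) ^ (1 / μ.toReal)

/-- `Σ_{t,ν}`: sequences supported on a set `Γ` with `ν(Γ) ≤ t`. -/
def SigmaSet {D : Type*} (ν : Set D → ℝ≥0∞) (t : ℝ≥0∞) : Set (D → ℂ) :=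
  {c | ∃ Γ : Set D, ν Γ ≤ t ∧ ∀ P ∉ Γ, c P = 0}

/-- Restricted approximation error `σ_ν(t,s)_𝔣`. -/
noncomputable def approxErr {D : Type*} (F : (D → ℂ) → ℝ≥0∞) (ν : Set D → ℝ≥0∞) (t : ℝ≥0∞)
    (s : D → ℂ) : ℝ≥0∞ :=
  ⨅ c ∈ SigmaSet ν t, F (fun P => s P - c P)

/-- Quasi-norm of the restricted approximation space `A^ξ_μ(𝔣,ν)`. -/
noncomputable def approxNorm {D : Type*} (F : (D → ℂ) → ℝ≥0∞) (ν : Set D → ℝ≥0∞) (ξ : ℝ)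
    (μ : ℝ≥0∞) (s : D → ℂ) : ℝ≥0∞ :=
  if μ = ∞ then
    ⨆ t : {t : ℝ // 0 < t}, ENNReal.ofReal (t.1 ^ ξ) * approxErr F ν (ENNReal.ofReal t.1) s
  else
    (∫⁻ t in Set.Ioi (0 : ℝ),
        (ENNReal.ofReal (t ^ ξ) * approxErr F ν (ENNReal.ofReal t) s) ^ μ.toReal /
          ENNReal.ofReal t) ^ (1 / μ.toReal)

/-- Peetre `K`-functional for a couple of quasi-normed sequence spaces. -/
noncomputable def Kfun {D : Type*} (X Y : (D → ℂ) → ℝ≥0∞) (t : ℝ≥0∞) (s : D → ℂ) : ℝ≥0∞ :=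
  ⨅ a : D → ℂ, X a + t * Y (fun P => s P - a P)

/-- Quasi-norm of the real interpolation space `(X,Y)_{θ,q}`. -/
noncomputable def interpNorm {D : Type*} (X Y : (D → ℂ) → ℝ≥0∞) (θ : ℝ) (q : ℝ≥0∞)
    (s : D → ℂ) : ℝ≥0∞ :=
  if q = ∞ then
    ⨆ t : {t : ℝ // 0 < t}, ENNReal.ofReal (t.1 ^ (-θ)) * Kfun X Y (ENNReal.ofReal t.1) s
  else
    (∫⁻ t in Set.Ioi (0 : ℝ),
        (ENNReal.ofReal (t ^ (-θ)) * Kfun X Y (ENNReal.ofReal t) s) ^ q.toReal /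
          ENNReal.ofReal t) ^ (1 / q.toReal)

end Shear


section Aux
open Shear

lemma shearB_det (d : ℕ) (𝔡 : Fin d) (l : Fin (d - 1) → ℤ) : (shearB d 𝔡 l).det = 1 := by
  classical
  set w : Fin d → ℝ := fun c =>
    if hc : c = 𝔡 then 0
    else if h : (c : ℕ) < (𝔡 : ℕ) then (l ⟨c, by have := 𝔡.isLt; omega⟩ : ℝ)
      else (l ⟨(c : ℕ) - 1, by
        have h1 : (𝔡 : ℕ) ≠ (c : ℕ) := fun h => hc (Fin.ext h.symm)
        have := c.isLt; have := 𝔡.isLt; omega⟩ : ℝ) with hw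
  have hB : shearB d 𝔡 l = 1 + Matrix.replicateCol Unit (Pi.single 𝔡 (1:ℝ)) * Matrix.replicateRow Unit w := by
    ext i c
    simp only [Matrix.add_apply, Matrix.mul_apply, Matrix.replicateCol_apply, Matrix.replicateRow_apply,
      Finset.univ_unique, Finset.sum_singleton]
    by_cases hic : i = c
    · subst hic
      by_cases hi : i = 𝔡
      · subst hi
        simp [shearB, hw, Matrix.one_apply]
      · simp [shearB, hw, Matrix.one_apply, Pi.single_eq_of_ne hi]
    · by_cases hi : i = 𝔡
      · subst hi
        have hc : ¬ c = i := fun h => hic h.symm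
        simp only [shearB, dif_neg hic, dif_pos, Matrix.one_apply_ne hic,
          Pi.single_eq_same, hw, dif_neg hc, zero_add, one_mul]
      · simp [shearB, hw, dif_neg hic, dif_neg hi, Matrix.one_apply_ne hic,
          Pi.single_eq_of_ne hi]
  rw [hB, Matrix.det_one_add_replicateCol_mul_replicateRow]
  simp [hw, dotProduct, Pi.single_apply]

lemma cubeVol_pos {d : ℕ} (P : Index d) : 0 < cubeVol P := by
  unfold cubeVol; positivity

lemma shearAinv_det (d : ℕ) (hd : 1 ≤ d) (𝔡 : Fin d) (j : ℕ) :
    (shearAinv d 𝔡 j).det = (2 : ℝ) ^ (-(j : ℤ) * (d + 1)) := by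
  classical
  rw [shearAinv, Matrix.det_diagonal]
  rw [← Finset.mul_prod_erase Finset.univ _ (Finset.mem_univ 𝔡)]
  rw [if_pos rfl]
  have h1 : ∀ i ∈ Finset.univ.erase 𝔡,
      (if i = 𝔡 then (4 : ℝ) ^ (-(j : ℤ)) else (2 : ℝ) ^ (-(j : ℤ))) = (2:ℝ) ^ (-(j:ℤ)) := by
    intro i hi
    rw [if_neg (Finset.ne_of_mem_erase hi)]
  rw [Finset.prod_congr rfl h1, Finset.prod_const]
  have hcard : (Finset.univ.erase 𝔡).card = d - 1 := by
    rw [Finset.card_erase_of_mem (Finset.mem_univ 𝔡)]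
    simp
  rw [hcard]
  have h4 : (4 : ℝ) = (2 : ℝ) ^ (2 : ℤ) := by norm_num
  rw [h4, ← zpow_mul, ← zpow_natCast ((2:ℝ) ^ (-(j:ℤ))) (d-1), ← zpow_mul, ← zpow_add₀ (two_ne_zero)]
  congr 1
  have : ((d - 1 : ℕ) : ℤ) = (d : ℤ) - 1 := by omega
  rw [this]; ring

lemma volume_shearQ {d : ℕ} (hd : 1 ≤ d) (P : Index d) :
    volume (shearQ P) = ENNReal.ofReal (cubeVol P) := by
  classical
  set M : Matrix (Fin d) (Fin d) ℝ :=
    shearAinv d P.dir P.j * shearB d P.dir fun i => -P.l i with hM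
  have hdetM : M.det = cubeVol P := by
    rw [hM, Matrix.det_mul, shearAinv_det d hd, shearB_det, mul_one]; rfl
  have himg : shearQ P = ⇑(M.mulVecLin) ''
      {y : Fin d → ℝ | ∀ i, (P.k i : ℝ) ≤ y i ∧ y i < (P.k i : ℝ) + 1} := rfl
  have hdetlin : LinearMap.det M.mulVecLin = cubeVol P := by
    rw [← Matrix.toLin'_apply', LinearMap.det_toLin', hdetM]
  rw [himg, Measure.addHaar_image_linearMap, hdetlin, abs_of_pos (cubeVol_pos P)]
  have hset : {y : Fin d → ℝ | ∀ i, (P.k i : ℝ) ≤ y i ∧ y i < (P.k i : ℝ) + 1} =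
      Set.pi Set.univ (fun i => Set.Ico ((P.k i : ℝ)) ((P.k i : ℝ) + 1)) := by
    ext y; simp [Set.mem_pi, Set.mem_Ico]
  rw [hset, volume_pi_pi]
  simp [Real.volume_Ico]

lemma shearQ_measurable {d : ℕ} (hd : 1 ≤ d) (P : Index d) :
    MeasurableSet (shearQ P) := by
  classical
  set M : Matrix (Fin d) (Fin d) ℝ :=
    shearAinv d P.dir P.j * shearB d P.dir fun i => -P.l i with hM
  have hdetlin : LinearMap.det M.mulVecLin = cubeVol P := by
    rw [← Matrix.toLin'_apply', LinearMap.det_toLin', hM, Matrix.det_mul,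
      shearAinv_det d hd, shearB_det, mul_one]; rfl
  have hne : LinearMap.det M.mulVecLin ≠ 0 := by
    rw [hdetlin]; exact (cubeVol_pos P).ne'
  set e := M.mulVecLin.equivOfDetNeZero hne with he
  have hset : MeasurableSet
      {y : Fin d → ℝ | ∀ i, (P.k i : ℝ) ≤ y i ∧ y i < (P.k i : ℝ) + 1} := by
    have : {y : Fin d → ℝ | ∀ i, (P.k i : ℝ) ≤ y i ∧ y i < (P.k i : ℝ) + 1} =
        Set.pi Set.univ (fun i => Set.Ico ((P.k i : ℝ)) ((P.k i : ℝ) + 1)) := by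
      ext y; simp [Set.mem_pi, Set.mem_Ico]
    rw [this]
    exact MeasurableSet.univ_pi fun i => measurableSet_Ico
  have hQ : shearQ P = (e : (Fin d → ℝ) ≃ₗ[ℝ] (Fin d → ℝ)) ''
      {y : Fin d → ℝ | ∀ i, (P.k i : ℝ) ≤ y i ∧ y i < (P.k i : ℝ) + 1} := by
    have : ⇑(e : (Fin d → ℝ) ≃ₗ[ℝ] (Fin d → ℝ)) = ⇑(M.mulVecLin) := by
      ext x; simp [he]
    rw [this]; rfl
  rw [hQ, LinearEquiv.image_eq_preimage_symm]
  exact hset.preimage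
    ((e.symm : (Fin d → ℝ) →ₗ[ℝ] (Fin d → ℝ)).continuous_of_finiteDimensional).measurable

lemma tlNorm_single {d : ℕ} (hd : 1 ≤ d) (P : Index d) (s p : ℝ) (hp : 0 < p)
    (q : ℝ≥0∞) (hq : q ≠ 0) (v : ℝ) (hv : 0 ≤ v) :
    tlNorm s p q (Set.indicator {P} fun _ => (v : ℂ)) =
      ENNReal.ofReal (cubeVol P ^ (-s - 1/2) * v * cubeVol P ^ (1/p)) := by
  classical
  set c : Index d → ℂ := Set.indicator {P} fun _ => (v : ℂ) with hc
  have hcP : c P = v := by simp [hc]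
  have hcP' : ∀ P' ≠ P, c P' = 0 := by
    intro P' h; simp [hc, Set.indicator_of_notMem, h]
  set A : ℝ≥0∞ := ENNReal.ofReal (cubeVol P ^ (-s - 1/2)) * (‖(v:ℂ)‖₊ : ℝ≥0∞) with hA
  have hAfin : A ≠ ∞ := by
    rw [hA]; exact ENNReal.mul_ne_top ENNReal.ofReal_ne_top ENNReal.coe_ne_top
  have key : tlNorm s p q c = (∫⁻ x : Fin d → ℝ,
      (A * (shearQ P).indicator (fun _ => (1:ℝ≥0∞)) x) ^ p) ^ (1/p) := by
    simp only [tlNorm]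
    congr 1
    apply lintegral_congr
    intro x
    congr 1
    by_cases hq' : q = ∞
    · rw [if_pos hq']
      apply le_antisymm
      · apply iSup_le
        intro P'
        by_cases hPP : P' = P
        · subst hPP; rw [hcP]
        · rw [hcP' P' hPP]; simp
      · exact le_trans (le_of_eq (by rw [hcP])) (le_iSup _ P)
    · rw [if_neg hq']
      have hqr : 0 < q.toReal := ENNReal.toReal_pos hq hq'
      rw [tsum_eq_single P]
      · rw [← ENNReal.rpow_mul, mul_one_div, div_self hqr.ne', ENNReal.rpow_one, hcP]
      · intro P' hPP
        rw [hcP' P' hPP]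
        simp [ENNReal.zero_rpow_of_pos hqr]
  rw [key]
  have hint : ∀ x, (A * (shearQ P).indicator (fun _ => (1:ℝ≥0∞)) x) ^ p =
      (shearQ P).indicator (fun _ => A ^ p) x := by
    intro x
    by_cases hx : x ∈ shearQ P
    · simp [Set.indicator_of_mem hx]
    · simp [Set.indicator_of_notMem hx, ENNReal.zero_rpow_of_pos hp]
  rw [lintegral_congr hint, lintegral_indicator (shearQ_measurable hd P),
    setLIntegral_const, volume_shearQ hd P]
  have hAv : A = ENNReal.ofReal (cubeVol P ^ (-s - 1/2) * v) := by
    rw [hA, ENNReal.ofReal_mul (Real.rpow_pos_of_pos (cubeVol_pos P) _).le]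
    congr 1
    rw [← enorm_eq_nnnorm, ← ofReal_norm, Complex.norm_real, Real.norm_eq_abs, abs_of_nonneg hv]
  rw [hAv, ENNReal.mul_rpow_of_nonneg _ _ (by positivity : (0:ℝ) ≤ 1/p),
    ← ENNReal.rpow_mul, mul_one_div, div_self hp.ne', ENNReal.rpow_one,
    ENNReal.ofReal_rpow_of_pos (cubeVol_pos P),
    ← ENNReal.ofReal_mul (mul_nonneg (Real.rpow_pos_of_pos (cubeVol_pos P) _).le hv)]

lemma nu_single {d : ℕ} (β : ℝ) (P : Index d) :
    nu β ({P} : Set (Index d)) = ENNReal.ofReal (cubeVol P ^ β) := by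
  rw [nu]
  rw [tsum_eq_single (⟨P, rfl⟩ : ({P} : Set (Index d)))
    (fun b hb => absurd (Subtype.ext (Set.mem_singleton_iff.mp b.2)) hb)]

lemma key_exp (m : ℕ) (hm : 0 < m) (a b C : ℝ) (hC : 0 < C)
    (h : ∀ j : ℕ, ((2:ℝ) ^ (-(j:ℤ) * m)) ^ a ≤ C * ((2:ℝ) ^ (-(j:ℤ) * m)) ^ b) :
    b ≤ a := by
  by_contra hab
  push_neg at hab
  set y : ℝ := (2:ℝ) ^ ((m:ℝ) * (b - a)) with hy
  have hy1 : 1 < y := by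
    rw [hy, Real.one_lt_rpow_iff_of_pos (by norm_num : (0:ℝ) < 2)]
    exact Or.inl ⟨one_lt_two, mul_pos (by exact_mod_cast hm) (sub_pos.mpr hab)⟩
  obtain ⟨n, hn⟩ := pow_unbounded_of_one_lt C hy1
  have hr : (0:ℝ) < (2:ℝ) ^ (-(n:ℤ) * m) := by positivity
  have h3 : ((2:ℝ) ^ (-(n:ℤ) * m)) ^ (a - b) ≤ C := by
    rw [Real.rpow_sub hr, div_le_iff₀ (Real.rpow_pos_of_pos hr b)]
    calc ((2:ℝ) ^ (-(n:ℤ) * m)) ^ a ≤ C * ((2:ℝ) ^ (-(n:ℤ) * m)) ^ b := h n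
    _ = C * ((2:ℝ) ^ (-(n:ℤ) * m)) ^ b := rfl
  have h4 : ((2:ℝ) ^ (-(n:ℤ) * m)) ^ (a - b) = y ^ n := by
    rw [← Real.rpow_intCast (2:ℝ) (-(n:ℤ) * m), ← Real.rpow_natCast y n, hy,
      ← Real.rpow_mul (by norm_num : (0:ℝ) ≤ 2), ← Real.rpow_mul (by norm_num : (0:ℝ) ≤ 2)]
    congr 1
    push_cast
    ring
  rw [h4] at h3
  exact absurd h3 (not_le.mpr hn)

end Aux

/-- Converse part of Theorem 3.2: necessary bounds on the exponent `α` for the upper and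
lower democracy inequalities in `f^{s₁,q₁}_{p₁}(AB)` to hold over all finite `Γ ⊂ 𝒬_AB`. -/
theorem tl_democracy_converse (d : ℕ) (hd : 2 ≤ d) (s₁ s₂ p₁ p₂ : ℝ)
    (hp₁ : 0 < p₁) (hp₂ : 0 < p₂) (q₁ : ℝ≥0∞) (hq₁ : 0 < q₁) (α : ℝ) :
    ((∃ C' : ℝ, 0 < C' ∧ ∀ Γ : Finset (Shear.Index d),
        Shear.tlNorm s₁ p₁ q₁
            (Set.indicator (↑Γ : Set (Shear.Index d))
              fun P => ((Shear.cubeVol P ^ (s₂ - 1 / p₂ + 1 / 2) : ℝ) : ℂ)) ≤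
          ENNReal.ofReal C' *
            Shear.nu (α - p₁ * ((d : ℝ) - 1) / (q₁.toReal * ((d : ℝ) + 1)))
              (↑Γ : Set (Shear.Index d)) ^ (1 / p₁)) →
      α ≤ p₁ * (s₂ - 1 / p₂ - s₁ + 1 / p₁)
            + p₁ * ((d : ℝ) - 1) / (q₁.toReal * ((d : ℝ) + 1))) ∧
    ((∃ C : ℝ, 0 < C ∧ ∀ Γ : Finset (Shear.Index d),
        ENNReal.ofReal C *
            Shear.nu (α + ((d : ℝ) - 1) / ((d : ℝ) + 1)) (↑Γ : Set (Shear.Index d))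
              ^ (1 / p₁) ≤
          Shear.tlNorm s₁ p₁ q₁
            (Set.indicator (↑Γ : Set (Shear.Index d))
              fun P => ((Shear.cubeVol P ^ (s₂ - 1 / p₂ + 1 / 2) : ℝ) : ℂ))) →
      p₁ * (s₂ - 1 / p₂ - s₁ + 1 / p₁) - ((d : ℝ) - 1) / ((d : ℝ) + 1) ≤ α) := by
  classical
  have hd1 : 1 ≤ d := by omega
  have hdir : 0 < d := by omega
  set E : ℝ := s₂ - 1 / p₂ + 1 / 2 with hE
  -- test elements at every scale j
  let Pj : ℕ → Shear.Index d := fun j =>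
    ⟨⟨0, hdir⟩, j, fun _ => 0, fun _ => 0, fun i => by rw [abs_zero]; positivity⟩
  have hrpos : ∀ j : ℕ, (0:ℝ) < Shear.cubeVol (Pj j) := fun j => cubeVol_pos _
  have hlhs : ∀ j : ℕ,
      Shear.tlNorm s₁ p₁ q₁ (Set.indicator ((({Pj j} : Finset (Shear.Index d))) : Set (Shear.Index d))
          fun P => ((Shear.cubeVol P ^ E : ℝ) : ℂ)) =
        ENNReal.ofReal ((Shear.cubeVol (Pj j)) ^ (-s₁ - 1/2 + E + 1/p₁)) := by
    intro j
    rw [Finset.coe_singleton]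
    have hind : Set.indicator ({Pj j} : Set (Shear.Index d))
        (fun P => ((Shear.cubeVol P ^ E : ℝ) : ℂ)) =
        Set.indicator ({Pj j} : Set (Shear.Index d))
          (fun _ => ((Shear.cubeVol (Pj j) ^ E : ℝ) : ℂ)) :=
      Set.indicator_congr fun a ha => by rw [Set.mem_singleton_iff.mp ha]
    rw [hind, tlNorm_single hd1 (Pj j) s₁ p₁ hp₁ q₁ hq₁.ne' _
        (Real.rpow_pos_of_pos (hrpos j) E).le]
    rw [← Real.rpow_add (hrpos j), ← Real.rpow_add (hrpos j)]
  have hnu : ∀ (β : ℝ) (j : ℕ),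
      Shear.nu β (↑({Pj j} : Finset (Shear.Index d)) : Set (Shear.Index d)) ^ (1/p₁) =
        ENNReal.ofReal ((Shear.cubeVol (Pj j)) ^ (β * (1/p₁))) := by
    intro β j
    rw [Finset.coe_singleton, nu_single, ENNReal.ofReal_rpow_of_pos
      (Real.rpow_pos_of_pos (hrpos j) β), ← Real.rpow_mul (hrpos j).le]
  constructor
  · rintro ⟨C', hC', h⟩
    set β : ℝ := α - p₁ * ((d:ℝ) - 1) / (q₁.toReal * ((d:ℝ) + 1)) with hβ
    have hkey : β * (1/p₁) ≤ -s₁ - 1/2 + E + 1/p₁ := by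
      apply key_exp (d+1) (by omega) _ _ C' hC'
      intro j
      have h2 := h ({Pj j} : Finset (Shear.Index d))
      rw [hlhs j, hnu β j, ← ENNReal.ofReal_mul hC'.le] at h2
      have := (ENNReal.ofReal_le_ofReal_iff
        (mul_nonneg hC'.le (Real.rpow_pos_of_pos (hrpos j) _).le)).mp h2
      exact this
    have hmul : β ≤ (-s₁ - 1/2 + E + 1/p₁) * p₁ := by
      rw [mul_one_div] at hkey
      exact (div_le_iff₀ hp₁).mp hkey
    have hring : (-s₁ - 1/2 + E + 1/p₁) * p₁ = p₁ * (s₂ - 1/p₂ - s₁ + 1/p₁) := by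
      rw [hE]; ring
    rw [hring] at hmul
    rw [hβ] at hmul
    linarith
  · rintro ⟨C, hC, h⟩
    set β : ℝ := α + ((d:ℝ) - 1) / ((d:ℝ) + 1) with hβ
    have hkey : -s₁ - 1/2 + E + 1/p₁ ≤ β * (1/p₁) := by
      apply key_exp (d+1) (by omega) _ _ (1/C) (by positivity)
      intro j
      have h2 := h ({Pj j} : Finset (Shear.Index d))
      rw [hlhs j, hnu β j, ← ENNReal.ofReal_mul hC.le] at h2
      have h3 := (ENNReal.ofReal_le_ofReal_iff
        (Real.rpow_pos_of_pos (hrpos j) _).le).mp h2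
      have h4 : Shear.cubeVol (Pj j) ^ (β * (1/p₁)) ≤
          1/C * Shear.cubeVol (Pj j) ^ (-s₁ - 1/2 + E + 1/p₁) := by
        rw [one_div C, ← div_eq_inv_mul, le_div_iff₀ hC]
        linarith
      exact h4
    have hmul : (-s₁ - 1/2 + E + 1/p₁) * p₁ ≤ β := by
      rw [mul_one_div] at hkey
      exact (le_div_iff₀ hp₁).mp hkey
    have hring : (-s₁ - 1/2 + E + 1/p₁) * p₁ = p₁ * (s₂ - 1/p₂ - s₁ + 1/p₁) := by
      rw [hE]; ring
    rw [hring] at hmul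
    rw [hβ] at hmul
    linarith
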